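/- arXiv:2501.05720 — 2 statements merged into one kernel-verified Lean document; each statement's English description precedes it below -/
import Mathlib

section
/- Let k be a field and let L be the product of two 3-element chains with componentwise order (the divisor lattice of 36, which is the lattice of lower sets of the poset (2+2)). Then for every compatible monomial order ⪯ on S = k[x_α : α ∈ L], the set F_L does not form a Khovanskii basis of R(L) with respect to ⪯. -/
open MvPolynomial

/-- The leading exponent (multidegree) of a multivariate polynomial with respect to a
monomial order. -/
noncomputable def MonomialOrder.leadDegree {σ : Type*} (m : MonomialOrder σ)
    {R : Type*} [CommSemiring R] (f : MvPolynomial σ R) : σ →₀ ℕ :=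
  m.toSyn.symm (f.support.sup fun d => m.toSyn d)

/-- The leading term `in_⪯(f)` of a multivariate polynomial with respect to a
monomial order. -/
noncomputable def MonomialOrder.leadTerm {σ : Type*} (m : MonomialOrder σ)
    {R : Type*} [CommSemiring R] (f : MvPolynomial σ R) : MvPolynomial σ R :=
  MvPolynomial.monomial (m.leadDegree f) (f.coeff (m.leadDegree f))

/-- `F` is a Khovanskii (SAGBI) basis of the subalgebra `R` with respect to the monomial
order `m`: the subalgebra generated by the leading terms of nonzero elements of `F` equals
the subalgebra generated by the leading terms of nonzero elements of `R`. -/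
def IsKhovanskiiBasis {σ k : Type*} [Field k] (m : MonomialOrder σ)
    (R : Subalgebra k (MvPolynomial σ k)) (F : Set (MvPolynomial σ k)) : Prop :=
  F ⊆ (R : Set (MvPolynomial σ k)) ∧
  Algebra.adjoin k (m.leadTerm '' {f ∈ F | f ≠ 0}) =
    Algebra.adjoin k (m.leadTerm '' {f ∈ (R : Set (MvPolynomial σ k)) | f ≠ 0})

/-- The binomial `f_{α,β} = x_α x_β - x_{α⊓β} x_{α⊔β}`. -/
noncomputable def hibiPoly (k : Type*) [Field k] {σ : Type*} [Lattice σ] (α β : σ) :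
    MvPolynomial σ k :=
  X α * X β - X (α ⊓ β) * X (α ⊔ β)

/-- The set `F_L = {f_{α,β} : α, β ∈ L incomparable}`. -/
def hibiSet (k : Type*) [Field k] (σ : Type*) [Lattice σ] : Set (MvPolynomial σ k) :=
  {g | ∃ α β : σ, ¬ α ≤ β ∧ ¬ β ≤ α ∧ g = hibiPoly k α β}

/-- A monomial order is compatible if the leading term of each `f_{α,β}` is `x_α x_β`. -/
def IsCompatible (k : Type*) [Field k] {σ : Type*} [Lattice σ] (m : MonomialOrder σ) : Prop :=
  ∀ α β : σ, ¬ α ≤ β → ¬ β ≤ α → m.leadTerm (hibiPoly k α β) = X α * X β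

/-- `P` is `(2+2)`-free. -/
def TwoTwoFree (P : Type*) [PartialOrder P] : Prop :=
  ¬ ∃ a b c d : P, a < b ∧ c < d ∧ a ≠ c ∧ a ≠ d ∧ b ≠ c ∧ b ≠ d ∧
    ¬ a ≤ c ∧ ¬ c ≤ a ∧ ¬ a ≤ d ∧ ¬ d ≤ a ∧ ¬ b ≤ c ∧ ¬ c ≤ b ∧ ¬ b ≤ d ∧ ¬ d ≤ b

/-- `P` is `(1+1+1)`-free: no antichain of three elements. -/
def OneOneOneFree (P : Type*) [PartialOrder P] : Prop :=
  ¬ ∃ a b c : P, a ≠ b ∧ a ≠ c ∧ b ≠ c ∧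
    ¬ a ≤ b ∧ ¬ b ≤ a ∧ ¬ a ≤ c ∧ ¬ c ≤ a ∧ ¬ b ≤ c ∧ ¬ c ≤ b

/-- `P` is irreducible with respect to ordinal sum. -/
def OrdinalSumIrreducible (P : Type*) [PartialOrder P] : Prop :=
  ¬ ∃ A B : Set P, A.Nonempty ∧ B.Nonempty ∧ Disjoint A B ∧ A ∪ B = Set.univ ∧
    ∀ a ∈ A, ∀ b ∈ B, a < b

/-- The leading exponent of a nonzero polynomial lies in its support. -/
lemma degree_mem_support_aux {σ K : Type*} [CommSemiring K] (m : MonomialOrder σ)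
    {f : MvPolynomial σ K} (hf : f ≠ 0) : m.leadDegree f ∈ f.support := by
  have hne : f.support.Nonempty :=
    Finset.nonempty_iff_ne_empty.mpr (fun h => hf (MvPolynomial.support_eq_empty.mp h))
  obtain ⟨d, hd, hds⟩ := Finset.exists_mem_eq_sup f.support hne (fun d => m.toSyn d)
  have : m.leadDegree f = d := by
    rw [MonomialOrder.leadDegree, hds, AddEquiv.symm_apply_apply]
  rwa [this]

/-- For the product of two 3-element chains (the divisor lattice of 36), `F_L` does not form
a Khovanskii basis of `R(L)` with respect to any compatible monomial order. -/
theorem statement3 (k : Type*) [Field k]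
    (m : MonomialOrder (Fin 3 × Fin 3)) (hm : IsCompatible k m) :
    ¬ IsKhovanskiiBasis m (Algebra.adjoin k (hibiSet k (Fin 3 × Fin 3)))
      (hibiSet k (Fin 3 × Fin 3)) := by
  rintro ⟨-, hadj⟩
  classical
  set ψ : MvPolynomial (Fin 3 × Fin 3) k →ₐ[k] MvPolynomial (Fin 3 × Fin 3) k :=
    aeval (fun v => if v = ((0 : Fin 3), (0 : Fin 3)) then 0 else X v) with hψ
  set g : MvPolynomial (Fin 3 × Fin 3) k :=
    hibiPoly k ((0,1) : Fin 3 × Fin 3) (1,0) * hibiPoly k ((0,2) : Fin 3 × Fin 3) (2,0)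
      - hibiPoly k ((0,2) : Fin 3 × Fin 3) (1,0) * hibiPoly k ((0,1) : Fin 3 × Fin 3) (2,0)
    with hgdef
  have e1 : ((0,1) : Fin 3 × Fin 3) ⊓ (1,0) = (0,0) := by decide
  have e2 : ((0,1) : Fin 3 × Fin 3) ⊔ (1,0) = (1,1) := by decide
  have e3 : ((0,2) : Fin 3 × Fin 3) ⊓ (2,0) = (0,0) := by decide
  have e4 : ((0,2) : Fin 3 × Fin 3) ⊔ (2,0) = (2,2) := by decide
  have e5 : ((0,2) : Fin 3 × Fin 3) ⊓ (1,0) = (0,0) := by decide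
  have e6 : ((0,2) : Fin 3 × Fin 3) ⊔ (1,0) = (1,2) := by decide
  have e7 : ((0,1) : Fin 3 × Fin 3) ⊓ (2,0) = (0,0) := by decide
  have e8 : ((0,1) : Fin 3 × Fin 3) ⊔ (2,0) = (2,1) := by decide
  have hgeq : g = X ((0,0) : Fin 3 × Fin 3) *
      (X ((0,0) : Fin 3 × Fin 3) * X (1,1) * X (2,2)
        + X ((0,2) : Fin 3 × Fin 3) * X (1,0) * X (2,1)
        + X ((0,1) : Fin 3 × Fin 3) * X (1,2) * X (2,0)
        - X ((0,1) : Fin 3 × Fin 3) * X (1,0) * X (2,2)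
        - X ((0,2) : Fin 3 × Fin 3) * X (1,1) * X (2,0)
        - X ((0,0) : Fin 3 × Fin 3) * X (1,2) * X (2,1)) := by
    rw [hgdef]; unfold hibiPoly; rw [e1, e2, e3, e4, e5, e6, e7, e8]; ring
  -- `g` is nonzero: it evaluates to `1` at a suitable point
  have hval : aeval (fun v : Fin 3 × Fin 3 =>
      if v = (0,0) ∨ v = (1,1) ∨ v = (2,2) then (1 : k) else 0) g = 1 := by
    rw [hgeq]
    simp only [map_mul, map_add, map_sub, aeval_X]
    norm_num [Fin.ext_iff]
  have hg0 : g ≠ 0 := by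
    intro h0
    rw [h0, map_zero] at hval
    exact zero_ne_one hval
  -- every monomial of `g` contains `x_{(0,0)}`
  have hx00 : ∀ d ∈ g.support, d ((0,0) : Fin 3 × Fin 3) ≠ 0 := by
    intro d hd h0
    rw [MvPolynomial.mem_support_iff, hgeq, MvPolynomial.coeff_X_mul',
      if_neg (by simpa [Finsupp.mem_support_iff] using h0)] at hd
    exact hd rfl
  have hdsup : m.leadDegree g ∈ g.support := degree_mem_support_aux m hg0
  -- `g` lies in `R(L)`
  have hgmem : g ∈ Algebra.adjoin k (hibiSet k (Fin 3 × Fin 3)) := by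
    rw [hgdef]
    refine sub_mem (mul_mem ?_ ?_) (mul_mem ?_ ?_) <;> apply Algebra.subset_adjoin
    · exact ⟨(0,1), (1,0), by decide, by decide, rfl⟩
    · exact ⟨(0,2), (2,0), by decide, by decide, rfl⟩
    · exact ⟨(0,2), (1,0), by decide, by decide, rfl⟩
    · exact ⟨(0,1), (2,0), by decide, by decide, rfl⟩
  -- the leading term of `g` is in the RHS adjoin
  have hT : m.leadTerm g ∈
      Algebra.adjoin k (m.leadTerm ''
        {f ∈ ((Algebra.adjoin k (hibiSet k (Fin 3 × Fin 3)) : Subalgebra k _) :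
          Set (MvPolynomial (Fin 3 × Fin 3) k)) | f ≠ 0}) :=
    Algebra.subset_adjoin ⟨g, ⟨hgmem, hg0⟩, rfl⟩
  -- the LHS adjoin is fixed pointwise by `ψ`
  have hfix : Algebra.adjoin k (m.leadTerm '' {f ∈ hibiSet k (Fin 3 × Fin 3) | f ≠ 0})
      ≤ AlgHom.equalizer ψ (AlgHom.id k _) := by
    apply Algebra.adjoin_le
    rintro _ ⟨f, ⟨⟨α, β, hαβ, hβα, rfl⟩, -⟩, rfl⟩
    rw [hm α β hαβ hβα]
    have hα : α ≠ ((0,0) : Fin 3 × Fin 3) := by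
      rintro rfl
      exact hαβ ⟨Fin.zero_le _, Fin.zero_le _⟩
    have hβ : β ≠ ((0,0) : Fin 3 × Fin 3) := by
      rintro rfl
      exact hβα ⟨Fin.zero_le _, Fin.zero_le _⟩
    show ψ (X α * X β) = X α * X β
    rw [hψ, map_mul, aeval_X, aeval_X, if_neg hα, if_neg hβ]
  have hTfix : ψ (m.leadTerm g) = m.leadTerm g := hfix (hadj ▸ hT)
  -- but `ψ` kills the leading term of `g`
  have hψT : ψ (m.leadTerm g) = 0 := by
    rw [MonomialOrder.leadTerm, hψ, aeval_monomial]
    apply mul_eq_zero_of_right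
    rw [Finsupp.prod]
    apply Finset.prod_eq_zero (Finsupp.mem_support_iff.mpr (hx00 _ hdsup))
    rw [if_pos rfl]
    exact zero_pow (hx00 _ hdsup)
  rw [hTfix, MonomialOrder.leadTerm, MvPolynomial.monomial_eq_zero] at hψT
  exact MvPolynomial.mem_support_iff.mp hdsup hψT
end

section
/- Let k be a field and let L be the Boolean lattice of rank 3, i.e., the powerset of a 3-element set ordered by inclusion (the lattice of lower sets of the 3-element antichain (1+1+1)). Then for every compatible monomial order ⪯ on S = k[x_α : α ∈ L], the set F_L does not form a Khovanskii basis of R(L) with respect to ⪯. -/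
open MvPolynomial

-- auxiliary lemmas

lemma degree_mem_support' {σ : Type*} (m : MonomialOrder σ) {k : Type*} [CommSemiring k]
    {f : MvPolynomial σ k} (hf : f ≠ 0) : m.leadDegree f ∈ f.support := by
  obtain ⟨d, hd, h⟩ := Finset.exists_mem_eq_sup f.support
    (MvPolynomial.support_nonempty.mpr hf) (fun d => m.toSyn d)
  have : m.leadDegree f = d := by
    unfold MonomialOrder.leadDegree
    rw [h, AddEquiv.symm_apply_apply]
  rwa [this]

namespace St4Aux

def sa : Set (Fin 3) := {0}
def sb : Set (Fin 3) := {1}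
def sc : Set (Fin 3) := {2}
def sA : Set (Fin 3) := {1,2}
def sB : Set (Fin 3) := {0,2}
def sC : Set (Fin 3) := {0,1}

lemma incomp_aA : ¬ sa ≤ sA ∧ ¬ sA ≤ sa := by
  constructor
  · intro h; simpa [sa, sA] using h rfl
  · intro h; have := h (show (1:Fin 3) ∈ sA by simp [sA]); simpa [sa] using this

lemma incomp_bB : ¬ sb ≤ sB ∧ ¬ sB ≤ sb := by
  constructor
  · intro h; simpa [sb, sB] using h rfl
  · intro h; have := h (show (0:Fin 3) ∈ sB by simp [sB]); simpa [sb] using this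

lemma incomp_cC : ¬ sc ≤ sC ∧ ¬ sC ≤ sc := by
  constructor
  · intro h; simpa [sc, sC] using h rfl
  · intro h; have := h (show (0:Fin 3) ∈ sC by simp [sC]); simpa [sc] using this

lemma incomp_ab : ¬ sa ≤ sb ∧ ¬ sb ≤ sa := by
  constructor
  · intro h; simpa [sa, sb] using h rfl
  · intro h; simpa [sa, sb] using h rfl

lemma incomp_AB : ¬ sA ≤ sB ∧ ¬ sB ≤ sA := by
  constructor
  · intro h; have := h (show (1:Fin 3) ∈ sA by simp [sA]); simpa [sB] using this
  · intro h; have := h (show (0:Fin 3) ∈ sB by simp [sB]); simpa [sA] using this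

lemma inf_aA : sa ⊓ sA = ∅ := by ext x; fin_cases x <;> simp [sa, sA]
lemma inf_bB : sb ⊓ sB = ∅ := by ext x; fin_cases x <;> simp [sb, sB]
lemma inf_cC : sc ⊓ sC = ∅ := by ext x; fin_cases x <;> simp [sc, sC]
lemma inf_ab : sa ⊓ sb = ∅ := by ext x; fin_cases x <;> simp [sa, sb]
lemma sup_AB : sA ⊔ sB = Set.univ := by ext x; fin_cases x <;> simp [sA, sB]

lemma ne_empty_a : sa ≠ ∅ := by
  intro h; have : (0:Fin 3) ∈ sa := rfl; rw [h] at this; simp at this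
lemma ne_empty_b : sb ≠ ∅ := by
  intro h; have : (1:Fin 3) ∈ sb := rfl; rw [h] at this; simp at this
lemma ne_empty_c : sc ≠ ∅ := by
  intro h; have : (2:Fin 3) ∈ sc := rfl; rw [h] at this; simp at this
lemma ne_empty_A : sA ≠ ∅ := by
  intro h; have : (1:Fin 3) ∈ sA := by simp [sA]
  rw [h] at this; simp at this
lemma ne_empty_B : sB ≠ ∅ := by
  intro h; have : (0:Fin 3) ∈ sB := by simp [sB]
  rw [h] at this; simp at this
lemma ne_empty_C : sC ≠ ∅ := by
  intro h; have : (0:Fin 3) ∈ sC := by simp [sC]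
  rw [h] at this; simp at this
lemma ne_empty_infAB : sA ⊓ sB ≠ ∅ := by
  intro h; have : (2:Fin 3) ∈ sA ⊓ sB := by simp [sA, sB]
  rw [h] at this; simp at this
lemma ne_empty_univ : (Set.univ : Set (Fin 3)) ≠ ∅ := by
  intro h; have : (0:Fin 3) ∈ (Set.univ : Set (Fin 3)) := trivial
  rw [h] at this; simp at this

end St4Aux

open St4Aux

/-- For the Boolean lattice of rank 3 (the powerset of a 3-element set), `F_L` does not form
a Khovanskii basis of `R(L)` with respect to any compatible monomial order. -/
theorem statement4 (k : Type*) [Field k]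
    (m : MonomialOrder (Set (Fin 3))) (hm : IsCompatible k m) :
    ¬ IsKhovanskiiBasis m (Algebra.adjoin k (hibiSet k (Set (Fin 3))))
      (hibiSet k (Set (Fin 3))) := by
  classical
  rintro ⟨-, heq⟩
  -- the substitution sending X ∅ and X univ to 0
  set u : Set (Fin 3) → MvPolynomial (Set (Fin 3)) k :=
    fun s => if s = ∅ ∨ s = Set.univ then 0 else X s with hu
  -- every element of the adjoin of leading terms of F is fixed by aeval u
  have hfix : ∀ p ∈ Algebra.adjoin k (m.leadTerm '' {f ∈ hibiSet k (Set (Fin 3)) | f ≠ 0}),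
      aeval u p = p := by
    intro p hp
    induction hp using Algebra.adjoin_induction with
    | mem q hq =>
      obtain ⟨f, ⟨⟨α, β, h1, h2, rfl⟩, -⟩, rfl⟩ := hq
      rw [hm α β h1 h2]
      have hα1 : α ≠ ∅ := by rintro rfl; exact h1 (Set.empty_subset β)
      have hα2 : α ≠ Set.univ := by rintro rfl; exact h2 (Set.subset_univ β)
      have hβ1 : β ≠ ∅ := by rintro rfl; exact h2 (Set.empty_subset α)
      have hβ2 : β ≠ Set.univ := by rintro rfl; exact h1 (Set.subset_univ α)
      simp [hu, hα1, hα2, hβ1, hβ2]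
    | algebraMap r => simp
    | add x y hx hy ihx ihy => rw [map_add, ihx, ihy]
    | mul x y hx hy ihx ihy => rw [map_mul, ihx, ihy]
  -- the witness element g
  set g : MvPolynomial (Set (Fin 3)) k :=
    hibiPoly k sa sA * hibiPoly k sb sB * hibiPoly k sc sC -
      hibiPoly k sa sb * hibiPoly k sc sC * hibiPoly k sA sB with hg
  have hgR : g ∈ Algebra.adjoin k (hibiSet k (Set (Fin 3))) := by
    have h1 : hibiPoly k sa sA ∈ hibiSet k (Set (Fin 3)) :=
      ⟨sa, sA, incomp_aA.1, incomp_aA.2, rfl⟩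
    have h2 : hibiPoly k sb sB ∈ hibiSet k (Set (Fin 3)) :=
      ⟨sb, sB, incomp_bB.1, incomp_bB.2, rfl⟩
    have h3 : hibiPoly k sc sC ∈ hibiSet k (Set (Fin 3)) :=
      ⟨sc, sC, incomp_cC.1, incomp_cC.2, rfl⟩
    have h4 : hibiPoly k sa sb ∈ hibiSet k (Set (Fin 3)) :=
      ⟨sa, sb, incomp_ab.1, incomp_ab.2, rfl⟩
    have h5 : hibiPoly k sA sB ∈ hibiSet k (Set (Fin 3)) :=
      ⟨sA, sB, incomp_AB.1, incomp_AB.2, rfl⟩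
    exact sub_mem
      (mul_mem (mul_mem (Algebra.subset_adjoin h1) (Algebra.subset_adjoin h2))
        (Algebra.subset_adjoin h3))
      (mul_mem (mul_mem (Algebra.subset_adjoin h4) (Algebra.subset_adjoin h3))
        (Algebra.subset_adjoin h5))
  -- g is nonzero: evaluate at a point
  have hg0 : g ≠ 0 := by
    intro h0
    have := congrArg (aeval (fun s : Set (Fin 3) => if s = ∅ then (0:k) else 1)) h0
    rw [hg] at this
    simp only [hibiPoly, map_sub, map_mul, aeval_X, map_zero] at this
    rw [inf_aA, inf_bB, inf_cC, inf_ab, sup_AB] at this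
    rw [if_pos rfl, if_neg ne_empty_a, if_neg ne_empty_b, if_neg ne_empty_c,
      if_neg ne_empty_A, if_neg ne_empty_B, if_neg ne_empty_C,
      if_neg ne_empty_infAB, if_neg ne_empty_univ] at this
    simp at this
  -- leading term of g is in the adjoin of leading terms of F
  have hmem : m.leadTerm g ∈
      Algebra.adjoin k (m.leadTerm ''
        {f ∈ ((Algebra.adjoin k (hibiSet k (Set (Fin 3)))) :
          Set (MvPolynomial (Set (Fin 3)) k)) | f ≠ 0}) :=
    Algebra.subset_adjoin ⟨g, ⟨hgR, hg0⟩, rfl⟩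
  rw [← heq] at hmem
  have hfixg : aeval u (m.leadTerm g) = m.leadTerm g := hfix _ hmem
  -- every monomial of g involves X ∅ or X univ
  have hI : g ∈ Ideal.span (X '' ({∅, Set.univ} : Set (Set (Fin 3))) :
      Set (MvPolynomial (Set (Fin 3)) k)) := by
    rw [← Ideal.Quotient.eq_zero_iff_mem]
    have hX0 : Ideal.Quotient.mk (Ideal.span (X '' ({∅, Set.univ} : Set (Set (Fin 3))) :
        Set (MvPolynomial (Set (Fin 3)) k))) (X ∅) = 0 :=
      Ideal.Quotient.eq_zero_iff_mem.2 (Ideal.subset_span ⟨∅, by simp, rfl⟩)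
    have hXu : Ideal.Quotient.mk (Ideal.span (X '' ({∅, Set.univ} : Set (Set (Fin 3))) :
        Set (MvPolynomial (Set (Fin 3)) k))) (X Set.univ) = 0 :=
      Ideal.Quotient.eq_zero_iff_mem.2 (Ideal.subset_span ⟨Set.univ, by simp, rfl⟩)
    rw [hg]
    simp only [hibiPoly]
    rw [inf_aA, inf_bB, inf_cC, inf_ab, sup_AB]
    simp only [map_sub, map_mul, hX0, hXu, zero_mul, mul_zero, sub_zero]
    ring
  obtain ⟨i, hi, hine⟩ :=
    MvPolynomial.mem_ideal_span_X_image.mp hI (m.leadDegree g) (degree_mem_support' m hg0)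
  -- but then aeval u kills the leading term of g
  have hzero : aeval u (m.leadTerm g) = 0 := by
    show aeval u (monomial (m.leadDegree g) (g.coeff (m.leadDegree g))) = 0
    rw [aeval_monomial]
    have hprod : ((m.leadDegree g).prod fun s n => u s ^ n) = 0 := by
      rw [Finsupp.prod]
      apply Finset.prod_eq_zero (Finsupp.mem_support_iff.mpr hine)
      have : u i = 0 := by
        rcases hi with rfl | hi
        · simp [hu]
        · simp only [Set.mem_singleton_iff] at hi
          subst hi; simp [hu]
      rw [this, zero_pow hine]
    rw [hprod, mul_zero]
  rw [hfixg] at hzero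
  have : g.coeff (m.leadDegree g) = 0 := by
    have := hzero
    rw [show m.leadTerm g = monomial (m.leadDegree g) (g.coeff (m.leadDegree g)) from rfl] at this
    exact MvPolynomial.monomial_eq_zero.mp this
  exact Finsupp.mem_support_iff.mp (degree_mem_support' m hg0) this
end
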